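/- Let (X, μ) be a standard Borel probability space, T : X → X a Borel measure-preserving bijection, and A ⊆ X a Borel set with A ∩ T(A) = ∅. If S : X → X is a Borel measure-preserving bijection such that for μ-almost every x, S(x) ∈ {x, T_A(x)}, then there is a Borel set A' ⊆ A such that S(x) = T_{A'}(x) for μ-almost every x. -/

import Mathlib

open MeasureTheory Set

/- For a bijection `T : X → X` and a set `A ⊆ X` with `A ∩ T(A) = ∅`, the involution
`T_A : X → X` sends `x ↦ T x` on `A`, `x ↦ T⁻¹ x` on `T '' A`, and is the identity
elsewhere. -/
open Classical in
noncomputable def invol {X : Type*} (T : Equiv.Perm X) (A : Set X) : X → X :=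
  fun x => if x ∈ A then T x else if x ∈ ⇑T '' A then T.symm x else x

theorem stmt7 {X : Type*} [MeasurableSpace X] [StandardBorelSpace X]
    (μ : Measure X) [IsProbabilityMeasure μ]
    (T : Equiv.Perm X) (hT : Measurable T) (hT' : Measurable T.symm)
    (hTμ : MeasurePreserving T μ μ)
    (A : Set X) (hA : MeasurableSet A) (hdisj : Disjoint A (⇑T '' A))
    (S : Equiv.Perm X) (hS : Measurable S) (hS' : Measurable S.symm)
    (hSμ : MeasurePreserving S μ μ)
    (hSloc : ∀ᵐ x ∂μ, S x = x ∨ S x = invol T A x) :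
    ∃ A' : Set X, A' ⊆ A ∧ MeasurableSet A' ∧ ∀ᵐ x ∂μ, S x = invol T A' x := by
  classical
  letI := upgradeStandardBorel X
  set A' : Set X := A ∩ {x | S x = T x} with hA'def
  have hA'sub : A' ⊆ A := inter_subset_left
  have hA'meas : MeasurableSet A' := by
    have hd : MeasurableSet {p : X × X | p.1 = p.2} := isClosed_diagonal.measurableSet
    exact hA.inter ((hS.prodMk hT) hd)
  have hTμ' : MeasurePreserving T.symm μ μ := by
    refine ⟨hT', ?_⟩
    conv_lhs => rw [← hTμ.map_eq]
    rw [Measure.map_map hT' hT]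
    simp
  have hSloc2 : ∀ᵐ x ∂μ, S (T.symm x) = T.symm x ∨
      S (T.symm x) = invol T A (T.symm x) := hTμ'.quasiMeasurePreserving.ae hSloc
  refine ⟨A', hA'sub, hA'meas, ?_⟩
  filter_upwards [hSloc, hSloc2] with x Px Px'
  have hTA' : ⇑T '' A' ⊆ ⇑T '' A := image_mono hA'sub
  by_cases hxA : x ∈ A
  · have hxTA : x ∉ ⇑T '' A := fun h => hdisj.le_bot ⟨hxA, h⟩
    by_cases hxA' : x ∈ A'
    · simp only [invol, if_pos hxA']
      exact hxA'.2
    · have hSx : S x = x := by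
        rcases Px with h | h
        · exact h
        · exfalso; apply hxA'
          simp only [invol, if_pos hxA] at h
          exact ⟨hxA, h⟩
      simp only [invol, if_neg hxA', if_neg (fun h => hxTA (hTA' h))]
      exact hSx
  · by_cases hxTA : x ∈ ⇑T '' A
    · obtain ⟨a, haA, rfl⟩ := hxTA
      have hane : a ≠ T a := by
        intro h
        exact hdisj.le_bot ⟨haA, ⟨a, haA, h.symm⟩⟩
      have hTaA' : T a ∉ A' := fun h => hxA h.1
      have hinv : invol T A (T a) = a := by
        simp only [invol, if_neg hxA, if_pos (mem_image_of_mem _ haA), Equiv.symm_apply_apply]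
      by_cases haA' : a ∈ A'
      · -- S a = T a, so S (T a) ≠ T a, hence S (T a) = a
        have hSa : S a = T a := haA'.2
        have hSx : S (T a) = a := by
          rcases Px with h | h
          · exfalso
            exact hane (S.injective (hSa.trans h.symm))
          · rwa [hinv] at h
        have : T a ∈ ⇑T '' A' := mem_image_of_mem _ haA'
        simp only [invol, if_neg hTaA', if_pos this, Equiv.symm_apply_apply]
        exact hSx
      · -- S a = a (from Px' at T a, since T.symm (T a) = a), so S (T a) = T a
        have hPa : S a = a ∨ S a = invol T A a := by
          simpa using Px'
        have hSa : S a = a := by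
          rcases hPa with h | h
          · exact h
          · exfalso; apply haA'
            simp only [invol, if_pos haA] at h
            exact ⟨haA, h⟩
        have hSx : S (T a) = T a := by
          rcases Px with h | h
          · exact h
          · rw [hinv] at h
            exact absurd (S.injective (h.trans hSa.symm)).symm hane
        have hnTA' : T a ∉ ⇑T '' A' := by
          rintro ⟨b, hbA', hb⟩
          exact haA' ((T.injective hb) ▸ hbA')
        simp only [invol, if_neg hTaA', if_neg hnTA']
        exact hSx
    · have hSx : S x = x := by
        rcases Px with h | h
        · exact h
        · simpa only [invol, if_neg hxA, if_neg hxTA] using h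
      simp only [invol, if_neg (fun h => hxA (hA'sub h)), if_neg (fun h => hxTA (hTA' h))]
      exact hSx
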